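/- Hahn-Banach extension theorem for order unit spaces: if $(V,C,u)$ is an order unit space over an ordered field $\mathbb{F} \subseteq \mathbb{R}$, $U \subseteq V$ is a subspace containing $u$, and $\sigma : U \to \mathbb{R}$ is a probability measure on $(U, C \cap U, u)$, then there exists a probability measure $\rho : V \to \mathbb{R}$ with $\rho|_U = \sigma$. -/

import Mathlib

/-- An order unit space `(V, C, u)` over an ordered field `𝔽`. -/
structure OUS (𝔽 V : Type*) [Field 𝔽] [LinearOrder 𝔽] [IsStrictOrderedRing 𝔽] [AddCommGroup V] [Module 𝔽 V] where
  C : Set V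
  u : V
  add_mem : ∀ ⦃a⦄, a ∈ C → ∀ ⦃b⦄, b ∈ C → a + b ∈ C
  smul_mem : ∀ l : 𝔽, 0 ≤ l → ∀ ⦃a⦄, a ∈ C → l • a ∈ C
  u_mem : u ∈ C
  neg_u_not_mem : -u ∉ C
  order_unit : ∀ a : V, ∃ l : 𝔽, l • u + a ∈ C

set_option synthInstance.maxHeartbeats 4000000
set_option maxHeartbeats 4000000

namespace OUSExt

open Set LinearMap Submodule

variable {F : Subfield ℝ} {V : Type*} [AddCommGroup V] [Module F V]

theorem step (O : OUS F V) (f : V →ₗ.[F] ℝ)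
    (nonneg : ∀ x : f.domain, (x : V) ∈ O.C → 0 ≤ f x)
    (dense : ∀ y, ∃ x : f.domain, (x : V) + y ∈ O.C) (hdom : f.domain ≠ ⊤) :
    ∃ g, f < g ∧ ∀ x : g.domain, (x : V) ∈ O.C → 0 ≤ g x := by
  obtain ⟨y, -, hy⟩ : ∃ y ∈ (⊤ : Submodule F V), y ∉ f.domain :=
    SetLike.exists_of_lt (lt_top_iff_ne_top.2 hdom)
  obtain ⟨c, le_c, c_le⟩ :
      ∃ c, (∀ x : f.domain, -(x : V) - y ∈ O.C → f x ≤ c) ∧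
        ∀ x : f.domain, (x : V) + y ∈ O.C → c ≤ f x := by
    set Sp := f '' { x : f.domain | (x : V) + y ∈ O.C }
    set Sn := f '' { x : f.domain | -(x : V) - y ∈ O.C }
    suffices (upperBounds Sn ∩ lowerBounds Sp).Nonempty by
      obtain ⟨c, hc1, hc2⟩ := this
      exact ⟨c, fun x hx => hc1 ⟨x, hx, rfl⟩, fun x hx => hc2 ⟨x, hx, rfl⟩⟩
    refine exists_between_of_forall_le (Nonempty.image f ?_) (Nonempty.image f (dense y)) ?_
    · rcases dense (-y) with ⟨x, hx⟩
      rw [← neg_neg x, NegMemClass.coe_neg, ← sub_eq_add_neg] at hx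
      exact ⟨_, hx⟩
    rintro a ⟨xn, hxn, rfl⟩ b ⟨xp, hxp, rfl⟩
    have := O.add_mem hxp hxn
    rw [add_assoc, add_sub_cancel, ← sub_eq_add_neg, ← AddSubgroupClass.coe_sub] at this
    replace := nonneg _ this
    rwa [f.map_sub, sub_nonneg] at this
  refine ⟨f.supSpanSingleton y (-c) hy, ?_, ?_⟩
  · refine lt_iff_le_not_ge.2 ⟨f.left_le_sup _ _, fun H => ?_⟩
    replace H := LinearPMap.domain_mono.monotone H
    rw [LinearPMap.domain_supSpanSingleton, sup_le_iff, span_le, singleton_subset_iff] at H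
    exact hy H.2
  · rintro ⟨z, hz⟩ hzs
    rcases mem_sup.1 hz with ⟨x, hx, y', hy', rfl⟩
    rcases mem_span_singleton.1 hy' with ⟨r, rfl⟩
    simp only [Subtype.coe_mk] at hzs
    rw [LinearPMap.supSpanSingleton_apply_mk _ _ _ _ _ hx, smul_neg, ← sub_eq_add_neg, sub_nonneg]
    rcases lt_trichotomy r 0 with (hr | hr | hr)
    · have hmem : -((r⁻¹ : F) • x) - y ∈ O.C := by
        have h0 : (0 : F) ≤ -r⁻¹ := by
          simpa using (inv_nonpos.2 hr.le)
        have := O.smul_mem (-r⁻¹) h0 hzs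
        rwa [smul_add, smul_smul, neg_mul, inv_mul_cancel₀ hr.ne, neg_smul, neg_smul,
          one_smul, ← sub_eq_add_neg] at this
      replace hmem : f (r⁻¹ • ⟨x, hx⟩) ≤ c := le_c (r⁻¹ • ⟨x, hx⟩) (by exact hmem)
      rw [f.map_smul] at hmem
      have hr' : (r : ℝ) < 0 := by exact_mod_cast hr
      have hsm : (r⁻¹ : F) • f ⟨x, hx⟩ = (r : ℝ)⁻¹ * f ⟨x, hx⟩ := by
        show ((r⁻¹ : F) : ℝ) * _ = _
        norm_cast
      rw [hsm] at hmem
      have := mul_le_mul_of_nonpos_left hmem hr'.le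
      rw [← mul_assoc, mul_inv_cancel₀ hr'.ne, one_mul] at this
      calc r • c = (r : ℝ) * c := rfl
        _ ≤ f ⟨x, hx⟩ := this
    · subst r
      simp only [zero_smul, add_zero] at hzs ⊢
      simpa using nonneg ⟨x, hx⟩ hzs
    · have hmem : ((r⁻¹ : F) • x : V) + y ∈ O.C := by
        have h0 : (0 : F) ≤ r⁻¹ := (inv_pos.2 hr).le
        have := O.smul_mem r⁻¹ h0 hzs
        rwa [smul_add, smul_smul, inv_mul_cancel₀ hr.ne', one_smul] at this
      replace hmem : c ≤ f (r⁻¹ • ⟨x, hx⟩) := c_le (r⁻¹ • ⟨x, hx⟩) (by exact hmem)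
      rw [f.map_smul] at hmem
      have hr' : (0 : ℝ) < (r : ℝ) := by exact_mod_cast hr
      have hsm : (r⁻¹ : F) • f ⟨x, hx⟩ = (r : ℝ)⁻¹ * f ⟨x, hx⟩ := by
        show ((r⁻¹ : F) : ℝ) * _ = _
        norm_cast
      rw [hsm] at hmem
      have := mul_le_mul_of_nonneg_left hmem hr'.le
      rw [← mul_assoc, mul_inv_cancel₀ hr'.ne', one_mul] at this
      calc r • c = (r : ℝ) * c := rfl
        _ ≤ f ⟨x, hx⟩ := this

theorem exists_top (O : OUS F V) (p : V →ₗ.[F] ℝ)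
    (hp_nonneg : ∀ x : p.domain, (x : V) ∈ O.C → 0 ≤ p x)
    (hp_dense : ∀ y, ∃ x : p.domain, (x : V) + y ∈ O.C) :
    ∃ q ≥ p, q.domain = ⊤ ∧ ∀ x : q.domain, (x : V) ∈ O.C → 0 ≤ q x := by
  set S := { p : V →ₗ.[F] ℝ | ∀ x : p.domain, (x : V) ∈ O.C → 0 ≤ p x }
  have hSc : ∀ c, c ⊆ S → IsChain (· ≤ ·) c → ∀ y ∈ c, ∃ ub ∈ S, ∀ z ∈ c, z ≤ ub := by
    intro c hcs c_chain y hy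
    clear hp_nonneg hp_dense p
    have cne : c.Nonempty := ⟨y, hy⟩
    have hcd : DirectedOn (· ≤ ·) c := c_chain.directedOn
    refine ⟨LinearPMap.sSup c hcd, ?_, fun _ ↦ LinearPMap.le_sSup hcd⟩
    rintro ⟨x, hx⟩ hxs
    have hdir : DirectedOn (· ≤ ·) (LinearPMap.domain '' c) :=
      directedOn_image.2 (hcd.mono LinearPMap.domain_mono.monotone)
    rcases (mem_sSup_of_directed (cne.image _) hdir).1 hx with ⟨_, ⟨f, hfc, rfl⟩, hfx⟩
    have : f ≤ LinearPMap.sSup c hcd := LinearPMap.le_sSup _ hfc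
    convert ← hcs hfc ⟨x, hfx⟩ hxs using 1
    exact this.2 rfl
  obtain ⟨q, hpq, hqs, hq⟩ := zorn_le_nonempty₀ S hSc p hp_nonneg
  refine ⟨q, hpq, ?_, hqs⟩
  contrapose! hq
  have hqd : ∀ y, ∃ x : q.domain, (x : V) + y ∈ O.C := fun y ↦
    let ⟨x, hx⟩ := hp_dense y
    ⟨Submodule.inclusion hpq.left x, hx⟩
  rcases step O q hqs hqd hq with ⟨r, hqr, hr⟩
  exact ⟨r, hr, hqr.le, fun hrq ↦ hqr.ne' <| hrq.antisymm hqr.le⟩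

end OUSExt

set_option synthInstance.maxHeartbeats 1000000 in
/-- Hahn-Banach extension theorem for order unit spaces over an ordered subfield of `ℝ`. -/
theorem stmt1 (F : Subfield ℝ) {V : Type*} [AddCommGroup V] [Module F V]
    (O : OUS F V) (U : Submodule F V) (hu : O.u ∈ U)
    (σ : U →ₗ[F] ℝ) (hσpos : ∀ a : U, (a : V) ∈ O.C → 0 ≤ σ a)
    (hσu : σ ⟨O.u, hu⟩ = 1) :
    ∃ ρ : V →ₗ[F] ℝ, (∀ a ∈ O.C, 0 ≤ ρ a) ∧ ρ O.u = 1 ∧ ∀ a : U, ρ (a : V) = σ a := by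
  set f : V →ₗ.[F] ℝ := ⟨U, σ⟩ with hf
  have hnonneg : ∀ x : f.domain, (x : V) ∈ O.C → 0 ≤ f x := hσpos
  have hdense : ∀ y, ∃ x : f.domain, (x : V) + y ∈ O.C := by
    intro y
    obtain ⟨l, hl⟩ := O.order_unit y
    exact ⟨⟨l • O.u, U.smul_mem l hu⟩, hl⟩
  rcases OUSExt.exists_top O f hnonneg hdense
    with ⟨⟨g_dom, g⟩, ⟨hUle, hfg⟩, (rfl : g_dom = ⊤), hgs⟩
  refine ⟨g.comp (LinearMap.id.codRestrict ⊤ fun _ ↦ trivial), fun a ha ↦ hgs ⟨a, _⟩ ha,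
    ?_, fun a ↦ ?_⟩
  · have : g ⟨O.u, trivial⟩ = σ ⟨O.u, hu⟩ := (hfg (x := ⟨O.u, hu⟩) rfl).symm
    exact this.trans hσu
  · exact (hfg (x := a) rfl).symm
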